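/- arXiv:1311.5620 — 2 statements merged into one kernel-verified Lean document; each statement's English description precedes it below -/
import Mathlib

section
/- Let 1 < p < ∞ and let a ∈ 𝔻 with a ≠ 0. Then for every f ∈ A^p, ∫_𝔻 f(z) / (1 − a·conj(z)) dσ(z) = (1/a) ∫_0^a f(ζ) dζ, where the right-hand integral is the complex line integral of f along the straight segment from 0 to a; that is, the function z ↦ 1/(1 − conj(a)z) is the kernel representing the functional f ↦ (1/a)∫_0^a f(ζ) dζ on A^p. -/
open MeasureTheory Complex Metric

/-- Normalized area measure on the unit disc: Lebesgue measure restricted to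
the unit disc, normalized so that the disc has measure 1. -/
noncomputable def σA : Measure ℂ :=
  (ENNReal.ofReal Real.pi)⁻¹ • (volume.restrict (ball (0:ℂ) 1))

/-- The Bergman projection of an integrable function on the unit disc. -/
noncomputable def bergmanProj (g : ℂ → ℂ) : ℂ → ℂ :=
  fun z => ∫ ζ, g ζ / (1 - (starRingEnd ℂ) ζ * z) ^ 2 ∂σA

/-- Membership in the Bergman space `A^p`: analytic on the unit disc with
`∫ |f|^p dσ < ∞`. -/
def MemAp (p : ℝ) (f : ℂ → ℂ) : Prop :=
  DifferentiableOn ℂ f (ball (0:ℂ) 1) ∧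
  Integrable (fun z => ‖f z‖ ^ p) σA

/-- The `A^p` norm `(∫ |f|^p dσ)^(1/p)`. -/
noncomputable def apNorm (p : ℝ) (f : ℂ → ℂ) : ℝ :=
  (∫ z, ‖f z‖ ^ p ∂σA) ^ (1/p)

/-- `sgn w = w / |w|` for `w ≠ 0`, and `sgn 0 = 0`. -/
noncomputable def csgn (w : ℂ) : ℂ := if w = 0 then 0 else w / ‖w‖

/-- The function `|F|^{p-1} sgn F`. -/
noncomputable def modPow (p : ℝ) (F : ℂ → ℂ) : ℂ → ℂ :=
  fun z => ((‖F z‖ ^ (p - 1) : ℝ) : ℂ) * csgn (F z)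

open Set
open scoped Real ENNReal

private lemma polar_symm_eq (r θ : ℝ) :
    Complex.polarCoord.symm (r, θ) = circleMap 0 r θ := by
  simp [Complex.polarCoord_symm_apply, circleMap, Complex.exp_mul_I,
    ← Complex.ofReal_cos, ← Complex.ofReal_sin]

private lemma integrableOn_polar {H : ℂ → ℂ} (hH : Integrable H) :
    IntegrableOn (fun p : ℝ × ℝ => p.1 • H (Complex.polarCoord.symm p))
      polarCoord.target := by
  set B : ℝ × ℝ → ℝ × ℝ →L[ℝ] ℝ × ℝ := fun p =>
    LinearMap.toContinuousLinearMap (Matrix.toLin (Module.Basis.finTwoProd ℝ) (Module.Basis.finTwoProd ℝ)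
      !![Real.cos p.2, -p.1 * Real.sin p.2; Real.sin p.2, p.1 * Real.cos p.2]) with hB
  have hd : ∀ p ∈ polarCoord.target,
      HasFDerivWithinAt polarCoord.symm (B p) polarCoord.target p :=
    fun p _ => (hasFDerivAt_polarCoord_symm p).hasFDerivWithinAt
  have B_det : ∀ p, (B p).det = p.1 := by
    intro p
    conv_rhs => rw [← one_mul p.1, ← Real.cos_sq_add_sin_sq p.2]
    simp only [hB, neg_mul, LinearMap.det_toContinuousLinearMap, LinearMap.det_toLin,
      Matrix.det_fin_two_of, sub_neg_eq_add]
    ring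
  have hg : Integrable (fun q : ℝ × ℝ => H (Complex.measurableEquivRealProd.symm q)) :=
    (Complex.volume_preserving_equiv_real_prod.symm).integrable_comp_emb
      Complex.measurableEquivRealProd.symm.measurableEmbedding |>.mpr hH
  have hinj : Set.InjOn polarCoord.symm polarCoord.target := polarCoord.symm.injOn
  have himg : polarCoord.symm '' polarCoord.target = polarCoord.source :=
    polarCoord.symm_image_target_eq_source
  have key := (integrableOn_image_iff_integrableOn_abs_det_fderiv_smul volume
      polarCoord.open_target.measurableSet hd hinj
      (fun q => H (Complex.measurableEquivRealProd.symm q))).mp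
      (by rw [himg]; exact hg.integrableOn)
  refine key.congr_fun (fun p hp => ?_) polarCoord.open_target.measurableSet
  beta_reduce
  rw [B_det, abs_of_pos hp.1]
  rfl

private lemma circle_avg {f : ℂ → ℂ} (hf : DifferentiableOn ℂ f (ball 0 1))
    {a : ℂ} (ha : ‖a‖ < 1) {r : ℝ} (hr0 : 0 < r) (hr1 : r < 1) :
    (∫ θ in (0:ℝ)..(2*π),
        f (circleMap 0 r θ) / (1 - a * (starRingEnd ℂ) (circleMap 0 r θ)))
      = ((2*π : ℝ) : ℂ) * f ((r:ℂ)^2 * a) := by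
  set w : ℂ := (r:ℂ)^2 * a with hw_def
  have hw : w ∈ ball (0:ℂ) r := by
    rw [mem_ball_zero_iff]
    have h1 : ‖w‖ = r^2 * ‖a‖ := by
      rw [hw_def, norm_mul, norm_pow, Complex.norm_real,
        Real.norm_eq_abs, _root_.abs_of_pos hr0]
    rw [h1]
    nlinarith [norm_nonneg a]
  have hd : DiffContOnCl ℂ f (ball 0 r) :=
    ⟨hf.mono (ball_subset_ball hr1.le),
      hf.continuousOn.mono
        (closure_ball_subset_closedBall.trans (closedBall_subset_ball hr1))⟩
  have hC := hd.circleIntegral_sub_inv_smul hw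
  rw [circleIntegral] at hC
  have hkey : ∀ θ : ℝ,
      deriv (circleMap 0 r) θ • ((circleMap 0 r θ - w)⁻¹ • f (circleMap 0 r θ))
        = Complex.I * (f (circleMap 0 r θ)
            / (1 - a * (starRingEnd ℂ) (circleMap 0 r θ))) := by
    intro θ
    set z := circleMap 0 r θ with hz_def
    have hz0 : z ≠ 0 := circleMap_ne_center hr0.ne'
    have hzz : z * (starRingEnd ℂ) z = (r:ℂ)^2 := by
      rw [Complex.mul_conj]
      rw [← Complex.sq_norm, norm_circleMap_zero, _root_.abs_of_pos hr0]
      push_cast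
      ring
    have h1 : (1 : ℂ) - a * (starRingEnd ℂ) z ≠ 0 := by
      intro h
      have : a * (starRingEnd ℂ) z = 1 := by linear_combination -h
      have habs : ‖a * (starRingEnd ℂ) z‖ = 1 := by rw [this]; simp
      rw [norm_mul, Complex.norm_conj, hz_def, norm_circleMap_zero,
        _root_.abs_of_pos hr0] at habs
      nlinarith [norm_nonneg a]
    have hzw : z - w = z * (1 - a * (starRingEnd ℂ) z) := by
      rw [mul_sub, mul_one, hw_def, mul_comm a, ← mul_assoc, hzz]
    have hzw0 : z - w ≠ 0 := by rw [hzw]; exact mul_ne_zero hz0 h1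
    rw [deriv_circleMap, ← hz_def, hzw]
    rw [smul_eq_mul, smul_eq_mul]
    field_simp
  simp only [hkey] at hC
  rw [intervalIntegral.integral_const_mul] at hC
  have : Complex.I * (∫ θ in (0:ℝ)..(2*π),
      f (circleMap 0 r θ) / (1 - a * (starRingEnd ℂ) (circleMap 0 r θ)))
      = Complex.I * (((2*π : ℝ) : ℂ) * f w) := by
    rw [hC, smul_eq_mul]; push_cast; ring
  exact mul_left_cancel₀ Complex.I_ne_zero this

private lemma ker_ne_zero {a z : ℂ} (ha : ‖a‖ < 1) (hz : ‖z‖ ≤ 1) :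
    (1:ℂ) - a * (starRingEnd ℂ) z ≠ 0 := by
  intro h
  have h2 : a * (starRingEnd ℂ) z = 1 := by linear_combination -h
  have habs : ‖a‖ * ‖z‖ = 1 := by
    have := congrArg (‖·‖) h2
    rwa [norm_mul, Complex.norm_conj, norm_one] at this
  nlinarith [norm_nonneg a, norm_nonneg z]

private lemma stmt10_aux (p : ℝ) (hp : 1 < p) (a : ℂ) (ha : a ∈ ball (0:ℂ) 1) (ha0 : a ≠ 0)
    (f : ℂ → ℂ) (hfd : DifferentiableOn ℂ f (ball (0:ℂ) 1))
    (hfp : Integrable (fun z => ‖f z‖ ^ p) σA) :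
      (∫ z, f z / (1 - a * (starRingEnd ℂ) z) ∂σA)
        = (1 / a) * ∫ t in (0:ℝ)..1, a * f ((t : ℂ) * a) := by
  have haabs : ‖a‖ < 1 := by
    rw [mem_ball_zero_iff] at ha; exact ha
  set μ : Measure ℂ := volume.restrict (ball (0:ℂ) 1) with hμ
  haveI : IsFiniteMeasure μ := ⟨by
    rw [hμ, Measure.restrict_apply_univ]; exact measure_ball_lt_top⟩
  have hfm : AEStronglyMeasurable f μ :=
    hfd.continuousOn.aestronglyMeasurable measurableSet_ball
  have hπ0 : (ENNReal.ofReal Real.pi)⁻¹ ≠ 0 := by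
    simp [ENNReal.inv_ne_zero]
  have hπt : (ENNReal.ofReal Real.pi)⁻¹ ≠ ∞ := by
    simp [ENNReal.inv_ne_top, ENNReal.ofReal_pos, Real.pi_pos]
  have hpint : Integrable (fun z => ‖f z‖ ^ p) μ := by
    have h2 := hfp
    rw [σA, ← hμ] at h2
    exact (integrable_smul_measure hπ0 hπt).mp h2
  have hq0 : (ENNReal.ofReal p) ≠ 0 := by
    simp only [ne_eq, ENNReal.ofReal_eq_zero, not_le]; linarith
  have hqt : (ENNReal.ofReal p) ≠ ∞ := ENNReal.ofReal_ne_top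
  have hmem : MemLp f (ENNReal.ofReal p) μ := by
    refine (memLp_norm_rpow_iff hfm hq0 hqt).mp ?_
    rw [ENNReal.div_self hq0 hqt, ENNReal.toReal_ofReal (by linarith : (0:ℝ) ≤ p),
      memLp_one_iff_integrable]
    exact hpint
  have hfint : Integrable f μ := hmem.integrable (by
    rw [ENNReal.one_le_ofReal]; linarith)
  have hker_cont : ContinuousOn (fun z => ((1:ℂ) - a * (starRingEnd ℂ) z)⁻¹)
      (ball (0:ℂ) 1) := by
    apply ContinuousOn.inv₀
    · exact (continuous_const.sub (continuous_const.mul continuous_conj)).continuousOn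
    · intro z hz
      rw [mem_ball_zero_iff] at hz
      exact ker_ne_zero haabs hz.le
  have hHint : IntegrableOn (fun z => f z / (1 - a * (starRingEnd ℂ) z)) (ball (0:ℂ) 1) := by
    have hb : Integrable (fun z => ((1:ℂ) - a * (starRingEnd ℂ) z)⁻¹ * f z) μ := by
      refine Integrable.bdd_mul (c := (1 - ‖a‖)⁻¹) hfint
        (hker_cont.aestronglyMeasurable measurableSet_ball) ?_
      filter_upwards [ae_restrict_mem measurableSet_ball] with z hz
      rw [mem_ball_zero_iff] at hz
      rw [norm_inv]
      refine inv_anti₀ (by linarith) ?_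
      have h1 := norm_sub_norm_le (1:ℂ) (a * (starRingEnd ℂ) z)
      rw [norm_one, norm_mul, Complex.norm_conj] at h1
      have h2 : ‖a‖ * ‖z‖ ≤ ‖a‖ :=
        (mul_le_mul_of_nonneg_left hz.le (norm_nonneg a)).trans_eq (mul_one _)
      linarith
    have heq : (fun z => f z / (1 - a * (starRingEnd ℂ) z))
        = fun z => ((1:ℂ) - a * (starRingEnd ℂ) z)⁻¹ * f z := by
      funext z; rw [div_eq_mul_inv, mul_comm]
    rw [heq]
    exact hb
  set H : ℂ → ℂ := fun z => f z / (1 - a * (starRingEnd ℂ) z) with hH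
  set H0 : ℂ → ℂ := (ball (0:ℂ) 1).indicator H with hH0
  have hH0int : Integrable H0 := (integrable_indicator_iff measurableSet_ball).mpr hHint
  have step1 : (∫ z, f z / (1 - a * (starRingEnd ℂ) z) ∂σA)
      = (Real.pi)⁻¹ • ∫ z, H0 z := by
    rw [σA, integral_smul_measure, ENNReal.toReal_inv,
      ENNReal.toReal_ofReal Real.pi_pos.le, hH0, integral_indicator measurableSet_ball]
  have step2 : (∫ z, H0 z) = ∫ p in polarCoord.target, p.1 • H0 (Complex.polarCoord.symm p) :=
    (Complex.integral_comp_polarCoord_symm H0).symm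
  have hGint := integrableOn_polar hH0int
  have step3 : (∫ p in polarCoord.target, p.1 • H0 (Complex.polarCoord.symm p))
      = ∫ r in Ioi (0:ℝ), ∫ θ in Ioo (-π) π, r • H0 (Complex.polarCoord.symm (r, θ)) := by
    rw [polarCoord_target] at hGint ⊢
    rw [Measure.volume_eq_prod] at hGint ⊢
    exact setIntegral_prod _ hGint
  have inner_eval : ∀ r ∈ Ioi (0:ℝ),
      (∫ θ in Ioo (-π) π, r • H0 (Complex.polarCoord.symm (r, θ)))
        = Set.indicator (Ioo (0:ℝ) 1)
            (fun s => ((2*π*s : ℝ) : ℂ) * f ((s:ℂ)^2 * a)) r := by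
    intro r hr
    rw [mem_Ioi] at hr
    rcases lt_or_ge r 1 with hr1 | hr1
    · rw [Set.indicator_of_mem (Set.mem_Ioo.mpr ⟨hr, hr1⟩)]
      have hball : ∀ θ : ℝ, Complex.polarCoord.symm (r, θ) ∈ ball (0:ℂ) 1 := by
        intro θ
        rw [polar_symm_eq, mem_ball_zero_iff, norm_circleMap_zero,
          _root_.abs_of_pos hr]
        exact hr1
      have hHeq : ∀ θ : ℝ, H0 (Complex.polarCoord.symm (r, θ)) = H (circleMap 0 r θ) := by
        intro θ
        rw [hH0, Set.indicator_of_mem (hball θ), polar_symm_eq]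
      simp only [hHeq]
      rw [integral_smul]
      have hIoo : (∫ θ in Ioo (-π) π, H (circleMap 0 r θ))
          = ∫ θ in (-π)..π, H (circleMap 0 r θ) := by
        rw [intervalIntegral.integral_of_le (by linarith [Real.pi_pos] : -π ≤ π),
          integral_Ioc_eq_integral_Ioo]
      have hper : Function.Periodic (fun θ => H (circleMap 0 r θ)) (2*π) :=
        (periodic_circleMap 0 r).comp H
      have hshift := hper.intervalIntegral_add_eq (-π) 0
      rw [show -π + 2*π = π by ring, zero_add] at hshift
      have hcav := circle_avg hfd haabs hr hr1
      rw [hIoo, hshift]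
      have : (∫ θ in (0:ℝ)..(2*π), H (circleMap 0 r θ))
          = ((2*π : ℝ) : ℂ) * f ((r:ℂ)^2 * a) := by
        rw [← hcav]
      rw [this, Complex.real_smul]
      push_cast
      ring
    · rw [Set.indicator_of_notMem (by simp [hr1, not_lt.mpr])]
      have hz : ∀ θ : ℝ, H0 (Complex.polarCoord.symm (r, θ)) = 0 := by
        intro θ
        rw [hH0]
        apply Set.indicator_of_notMem
        rw [polar_symm_eq, mem_ball_zero_iff, norm_circleMap_zero,
          _root_.abs_of_pos hr]
        exact not_lt.mpr hr1
      have hz2 : ∀ θ : ℝ, (r : ℝ) • H0 (Complex.polarCoord.symm (r, θ)) = 0 := by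
        intro θ; rw [hz, smul_zero]
      simp only [hz2, integral_zero]
  have step5 : (∫ r in Ioi (0:ℝ), ∫ θ in Ioo (-π) π, r • H0 (Complex.polarCoord.symm (r, θ)))
      = ∫ r in Ioo (0:ℝ) 1, ((2*π*r : ℝ) : ℂ) * f ((r:ℂ)^2 * a) := by
    rw [setIntegral_congr_fun measurableSet_Ioi inner_eval,
      setIntegral_indicator measurableSet_Ioo,
      Set.inter_eq_self_of_subset_right Set.Ioo_subset_Ioi_self]
  have step6 : (∫ r in Ioo (0:ℝ) 1, ((2*π*r : ℝ) : ℂ) * f ((r:ℂ)^2 * a))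
      = (π : ℝ) • ∫ t in (0:ℝ)..1, f ((t:ℂ) * a) := by
    rw [← integral_Ioc_eq_integral_Ioo,
      ← intervalIntegral.integral_of_le (by norm_num : (0:ℝ) ≤ 1)]
    have hgc : ContinuousOn (fun t : ℝ => f ((t:ℂ) * a))
        ((fun r : ℝ => r^2) '' Set.uIcc 0 1) := by
      have himg : ((fun r : ℝ => r^2) '' Set.uIcc 0 1) ⊆ Set.Icc 0 1 := by
        rintro x ⟨y, hy, rfl⟩
        rw [Set.uIcc_of_le (by norm_num : (0:ℝ) ≤ 1)] at hy
        refine Set.mem_Icc.mpr ⟨sq_nonneg y, ?_⟩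
        show y^2 ≤ 1
        nlinarith [hy.1, hy.2]
      refine (hfd.continuousOn.comp (by fun_prop) ?_).mono himg
      intro t ht
      rw [mem_ball_zero_iff, norm_mul, Complex.norm_real, Real.norm_eq_abs]
      rw [_root_.abs_of_nonneg ht.1]
      nlinarith [ht.1, ht.2, norm_nonneg a]
    have hsub := intervalIntegral.integral_comp_smul_deriv' (a := (0:ℝ)) (b := 1)
      (f := fun r : ℝ => r^2) (f' := fun r : ℝ => 2*r) (g := fun t : ℝ => f ((t:ℂ) * a))
      (fun x _ => by simpa using hasDerivAt_pow 2 x) (by fun_prop) hgc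
    calc (∫ r in (0:ℝ)..1, ((2*π*r : ℝ) : ℂ) * f ((r:ℂ)^2 * a))
        = ∫ r in (0:ℝ)..1, (π : ℝ) •
            ((2*r : ℝ) • ((fun t : ℝ => f ((t:ℂ) * a)) ∘ (fun s : ℝ => s^2)) r) := by
          apply intervalIntegral.integral_congr
          intro x _
          simp only [Function.comp_apply, Complex.real_smul]
          push_cast
          ring
      _ = (π : ℝ) • ∫ r in (0:ℝ)..1,
            (2*r : ℝ) • ((fun t : ℝ => f ((t:ℂ) * a)) ∘ (fun s : ℝ => s^2)) r := by
          rw [intervalIntegral.integral_smul]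
      _ = (π : ℝ) • ∫ t in (0:ℝ)..1, f ((t:ℂ) * a) := by
          congr 1
          simpa [Function.comp] using hsub
  rw [step1, step2, step3, step5, step6, smul_smul,
    inv_mul_cancel₀ Real.pi_ne_zero, one_smul,
    intervalIntegral.integral_const_mul, ← mul_assoc, one_div,
    inv_mul_cancel₀ ha0, one_mul]

/-- `1/(1 - conj(a) z)` is the kernel representing the functional
`f ↦ (1/a) ∫_0^a f(ζ) dζ` on `A^p`, where the line integral along the segment from
`0` to `a` is parametrized as `∫_0^1 a f(ta) dt`. -/
theorem stmt10 (p : ℝ) (hp : 1 < p) (a : ℂ) (ha : a ∈ ball (0:ℂ) 1) (ha0 : a ≠ 0) :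
    ∀ f : ℂ → ℂ, MemAp p f →
      (∫ z, f z / (1 - a * (starRingEnd ℂ) z) ∂σA)
        = (1 / a) * ∫ t in (0:ℝ)..1, a * f ((t : ℂ) * a) := by
  intro f hf
  exact stmt10_aux p hp a ha ha0 f hf.1 hf.2
end

section
/- Let 1 < p < ∞, let N ≥ 0 be an integer, let f be a polynomial of degree at most N, and let g ∈ A^p. Then 𝒫(f · conj(g)) is a polynomial of degree at most N. -/
open MeasureTheory Complex Metric

section Aux
open Set Filter


lemma angular {h : ℂ → ℂ} (hd : DifferentiableOn ℂ h (ball (0:ℂ) 1))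
    {r : ℝ} (hr0 : 0 < r) (hr1 : r < 1) {m : ℕ} (hm : 1 ≤ m) :
    ∫ θ in (-Real.pi)..Real.pi,
      (circleMap 0 r θ) ^ m * h (circleMap 0 r θ) = 0 := by
  have hsub : closedBall (0:ℂ) r ⊆ ball (0:ℂ) 1 := closedBall_subset_ball hr1
  have cont : ContinuousOn (fun z : ℂ => z ^ (m-1) * h z) (closedBall (0:ℂ) r) :=
    ((continuous_pow (m-1)).continuousOn).mul (hd.continuousOn.mono hsub)
  have hdiff : ∀ z ∈ ball (0:ℂ) r \ (∅ : Set ℂ),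
      DifferentiableAt ℂ (fun z : ℂ => z ^ (m-1) * h z) z := by
    intro z hz
    have hz1 : z ∈ ball (0:ℂ) 1 := ball_subset_ball hr1.le hz.1
    exact (differentiableAt_pow _).mul
      (hd.differentiableAt (isOpen_ball.mem_nhds hz1))
  have hC : (∮ z in C(0, r), z ^ (m-1) * h z) = 0 :=
    circleIntegral_eq_zero_of_differentiable_on_off_countable hr0.le
      Set.countable_empty cont hdiff
  have hCI : (∮ z in C(0, r), z ^ (m-1) * h z)
      = I * ∫ θ in (0:ℝ)..2*Real.pi, (circleMap 0 r θ) ^ m * h (circleMap 0 r θ) := by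
    rw [circleIntegral, ← intervalIntegral.integral_const_mul]
    apply intervalIntegral.integral_congr
    intro θ _
    simp only [deriv_circleMap, smul_eq_mul]
    have hpow : circleMap 0 r θ * (circleMap 0 r θ) ^ (m-1) = (circleMap 0 r θ) ^ m := by
      rw [← pow_succ']
      congr 1
      omega
    calc circleMap 0 r θ * I * ((circleMap 0 r θ) ^ (m-1) * h (circleMap 0 r θ))
        = I * (circleMap 0 r θ * (circleMap 0 r θ) ^ (m-1) * h (circleMap 0 r θ)) := by ring
      _ = I * ((circleMap 0 r θ) ^ m * h (circleMap 0 r θ)) := by rw [hpow]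
  have h2 : ∫ θ in (0:ℝ)..2*Real.pi, (circleMap 0 r θ) ^ m * h (circleMap 0 r θ) = 0 := by
    have := hCI.symm.trans hC
    rcases mul_eq_zero.mp this with h | h
    · exact absurd h I_ne_zero
    · exact h
  have per : Function.Periodic
      (fun θ => (circleMap 0 r θ) ^ m * h (circleMap 0 r θ)) (2*Real.pi) :=
    (periodic_circleMap 0 r).comp (fun z => z ^ m * h z)
  have := per.intervalIntegral_add_eq (-Real.pi) 0
  norm_num at this
  rw [show -Real.pi + 2*Real.pi = Real.pi by ring] at this
  rw [this]
  simpa using h2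

lemma polar_symm_eq_s13 (p : ℝ × ℝ) :
    Complex.polarCoord.symm p = circleMap 0 p.1 p.2 := by
  rw [Complex.polarCoord_symm_apply, circleMap]
  push_cast
  rw [Complex.exp_mul_I]
  simp

lemma discMoment_radius {h : ℂ → ℂ} (hd : DifferentiableOn ℂ h (ball (0:ℂ) 1))
    (j m : ℕ) (hm : 1 ≤ m) {s : ℝ} (hs0 : 0 < s) (hs1 : s < 1) :
    ∫ ζ in ball (0:ℂ) s, ((normSq ζ : ℂ)) ^ j * ζ ^ m * h ζ = 0 := by
  set Φ : ℂ → ℂ := fun ζ => ((normSq ζ : ℂ)) ^ j * ζ ^ m * h ζ with hΦ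
  have step1 : ∫ ζ in ball (0:ℂ) s, Φ ζ = ∫ ζ, (ball (0:ℂ) s).indicator Φ ζ :=
    (integral_indicator measurableSet_ball).symm
  rw [step1, ← Complex.integral_comp_polarCoord_symm]
  set t : Set (ℝ × ℝ) := {p | |p.1| < s} with ht
  have htm : MeasurableSet t := measurable_fst.norm measurableSet_Iio
  have hind : ∀ p : ℝ × ℝ, p.1 • (ball (0:ℂ) s).indicator Φ (Complex.polarCoord.symm p)
      = t.indicator (fun p : ℝ × ℝ => p.1 • Φ (Complex.polarCoord.symm p)) p := by
    intro p
    have hmem : Complex.polarCoord.symm p ∈ ball (0:ℂ) s ↔ p ∈ t := by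
      rw [mem_ball_zero_iff, Complex.norm_polarCoord_symm]
      exact Iff.rfl
    by_cases hp : p ∈ t
    · rw [Set.indicator_of_mem (hmem.mpr hp), Set.indicator_of_mem hp]
    · rw [Set.indicator_of_notMem (fun hc => hp (hmem.mp hc)),
        Set.indicator_of_notMem hp, smul_zero]
  simp_rw [hind]
  rw [setIntegral_indicator htm]
  have hset : polarCoord.target ∩ t = Ioo (0:ℝ) s ×ˢ Ioo (-Real.pi) Real.pi := by
    rw [polarCoord_target]
    ext p
    simp only [Set.mem_inter_iff, Set.mem_prod, Set.mem_Ioi, Set.mem_Ioo, ht,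
      Set.mem_setOf_eq]
    constructor
    · rintro ⟨⟨h1, h2⟩, h3⟩
      exact ⟨⟨h1, by rwa [abs_of_pos h1] at h3⟩, h2⟩
    · rintro ⟨⟨h1, h2⟩, h3⟩
      exact ⟨⟨h1, h3⟩, by rwa [abs_of_pos h1]⟩
  rw [hset]
  have hint : IntegrableOn (fun p : ℝ × ℝ => p.1 • Φ (Complex.polarCoord.symm p))
      (Ioo (0:ℝ) s ×ˢ Ioo (-Real.pi) Real.pi) := by
    have hK : IsCompact (Icc (0:ℝ) s ×ˢ Icc (-Real.pi) Real.pi) :=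
      isCompact_Icc.prod isCompact_Icc
    have hcont : ContinuousOn (fun p : ℝ × ℝ => p.1 • Φ (Complex.polarCoord.symm p))
        (Icc (0:ℝ) s ×ˢ Icc (-Real.pi) Real.pi) := by
      have hmaps : MapsTo (fun p : ℝ × ℝ => Complex.polarCoord.symm p)
          (Icc (0:ℝ) s ×ˢ Icc (-Real.pi) Real.pi) (ball (0:ℂ) 1) := by
        intro p hp
        rw [mem_ball_zero_iff, Complex.norm_polarCoord_symm]
        rcases hp with ⟨h1, _⟩
        rw [_root_.abs_of_nonneg h1.1]
        exact lt_of_le_of_lt h1.2 hs1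
      have hsymm_cont : Continuous (fun p : ℝ × ℝ => Complex.polarCoord.symm p) := by
        simp_rw [Complex.polarCoord_symm_apply]
        fun_prop
      have hΦcont : ContinuousOn Φ (ball (0:ℂ) 1) := by
        exact (((Complex.continuous_ofReal.comp Complex.continuous_normSq).pow j).mul
          (continuous_pow m)).continuousOn.mul hd.continuousOn
      exact continuous_fst.continuousOn.smul
        ((hΦcont.comp hsymm_cont.continuousOn hmaps))
    exact (hcont.integrableOn_compact hK).mono_set
      (Set.prod_mono Ioo_subset_Icc_self Ioo_subset_Icc_self)
  rw [Measure.volume_eq_prod, setIntegral_prod _ hint]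
  have hinner : ∀ r ∈ Ioo (0:ℝ) s,
      (∫ θ in Ioo (-Real.pi) Real.pi, (r, θ).1 • Φ (Complex.polarCoord.symm (r, θ))) = 0 := by
    intro r hr
    have hr1 : r < 1 := lt_trans hr.2 hs1
    have hΦc : ∀ θ : ℝ, Φ (Complex.polarCoord.symm (r, θ))
        = ((r^2 : ℝ) : ℂ) ^ j * ((circleMap 0 r θ) ^ m * h (circleMap 0 r θ)) := by
      intro θ
      rw [polar_symm_eq_s13]
      have : normSq (circleMap 0 r θ) = r ^ 2 := by
        rw [← Complex.sq_norm, norm_circleMap_zero, _root_.sq_abs]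
      rw [hΦ]
      simp only [this]
      ring
    simp_rw [hΦc]
    rw [integral_smul, integral_const_mul]
    have : ∫ θ in Ioo (-Real.pi) Real.pi,
        (circleMap 0 r θ) ^ m * h (circleMap 0 r θ) = 0 := by
      rw [← MeasureTheory.integral_Ioc_eq_integral_Ioo,
        ← intervalIntegral.integral_of_le (by linarith [Real.pi_pos])]
      exact angular hd hr.1 hr1 hm
    rw [this, mul_zero, smul_zero]
  calc ∫ r in Ioo (0:ℝ) s, ∫ θ in Ioo (-Real.pi) Real.pi,
        (r, θ).1 • Φ (Complex.polarCoord.symm (r, θ))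
      = ∫ r in Ioo (0:ℝ) s, (0 : ℂ) :=
        setIntegral_congr_fun measurableSet_Ioo hinner
    _ = 0 := integral_zero _ _

lemma discMoment {h : ℂ → ℂ} (hd : DifferentiableOn ℂ h (ball (0:ℂ) 1))
    (j m : ℕ) (hm : 1 ≤ m)
    (hint : IntegrableOn (fun ζ => ((normSq ζ : ℂ)) ^ j * ζ ^ m * h ζ) (ball (0:ℂ) 1)) :
    ∫ ζ in ball (0:ℂ) 1, ((normSq ζ : ℂ)) ^ j * ζ ^ m * h ζ = 0 := by
  set Φ : ℂ → ℂ := fun ζ => ((normSq ζ : ℂ)) ^ j * ζ ^ m * h ζ with hΦ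
  set rad : ℕ → ℝ := fun n => 1 - 1/(n+2) with hrad
  have hrad0 : ∀ n, 0 < rad n := by
    intro n
    have h1 : (1:ℝ)/(n+2) ≤ 1/2 := by
      apply one_div_le_one_div_of_le (by norm_num)
      push_cast; linarith
    simp only [hrad]; linarith
  have hrad1 : ∀ n, rad n < 1 := by
    intro n
    have : (0:ℝ) < 1/(n+2) := by positivity
    simp only [hrad]; linarith
  have hmono : Monotone (fun n => ball (0:ℂ) (rad n)) := by
    intro a b hab
    apply ball_subset_ball
    simp only [hrad]
    have : (1:ℝ)/(b+2) ≤ 1/(a+2) := by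
      apply one_div_le_one_div_of_le (by positivity)
      push_cast; exact_mod_cast by omega
    linarith
  have hU : (⋃ n, ball (0:ℂ) (rad n)) = ball (0:ℂ) 1 := by
    apply Set.Subset.antisymm
    · exact Set.iUnion_subset fun n => ball_subset_ball (hrad1 n).le
    · intro z hz
      rw [mem_ball_zero_iff] at hz
      obtain ⟨n, hn⟩ := exists_nat_one_div_lt (show (0:ℝ) < 1 - ‖z‖ by linarith)
      refine Set.mem_iUnion.mpr ⟨n, ?_⟩
      rw [mem_ball_zero_iff]
      have h2 : (1:ℝ)/(n+2) ≤ 1/(n+1) := by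
        apply one_div_le_one_div_of_le (by positivity)
        push_cast; linarith
      simp only [hrad]
      linarith
  have htend := tendsto_setIntegral_of_monotone (fun n => measurableSet_ball) hmono
    (by rw [hU]; exact hint)
  rw [hU] at htend
  have hzero : (fun n => ∫ ζ in ball (0:ℂ) (rad n), Φ ζ) = fun _ => (0:ℂ) := by
    funext n
    exact discMoment_radius hd j m hm (hrad0 n) (hrad1 n)
  rw [hzero] at htend
  exact tendsto_nhds_unique htend tendsto_const_nhds

end Aux

theorem stmt13 (p : ℝ) (hp : 1 < p) (N : ℕ)
    (f : Polynomial ℂ) (hf : f.degree ≤ (N : ℕ))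
    (g : ℂ → ℂ) (hg : MemAp p g) :
    ∃ Q : Polynomial ℂ, Q.degree ≤ (N : ℕ) ∧ ∀ w ∈ ball (0:ℂ) 1,
      bergmanProj (fun z => f.eval z * (starRingEnd ℂ) (g z)) w = Q.eval w := by
  obtain ⟨hganal, hgp0⟩ := hg
  set F : ℂ → ℂ := fun ζ => f.eval ζ * (starRingEnd ℂ) (g ζ) with hFdef
  haveI : IsFiniteMeasure (volume.restrict (ball (0:ℂ) 1)) :=
    ⟨by rw [Measure.restrict_apply_univ]; exact measure_ball_lt_top⟩
  -- transfer |g|^p integrability from σA to the restricted volume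
  have hc0 : ((ENNReal.ofReal Real.pi)⁻¹) ≠ 0 := by
    simp [ENNReal.inv_ne_zero]
  have hctop : ((ENNReal.ofReal Real.pi)⁻¹) ≠ ⊤ := by
    simp [ENNReal.inv_ne_top, Real.pi_pos]
  have hgp : Integrable (fun z => ‖g z‖ ^ p)
      (volume.restrict (ball (0:ℂ) 1)) := by
    rw [σA] at hgp0
    exact (integrable_smul_measure hc0 hctop).mp hgp0
  have hgm : AEStronglyMeasurable g (volume.restrict (ball (0:ℂ) 1)) :=
    hganal.continuousOn.aestronglyMeasurable measurableSet_ball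
  have hgint : Integrable g (volume.restrict (ball (0:ℂ) 1)) := by
    apply Integrable.mono' ((integrable_const (1:ℝ)).add hgp) hgm
    apply ae_of_all
    intro ζ
    simp only [Pi.add_apply]
    by_cases habs : ‖g ζ‖ ≤ 1
    · have h2 : (0:ℝ) ≤ ‖g ζ‖ ^ p := Real.rpow_nonneg (norm_nonneg _) p
      calc ‖g ζ‖ = ‖g ζ‖ := rfl
        _ ≤ 1 := habs
        _ ≤ 1 + ‖g ζ‖ ^ p := by linarith
    · push_neg at habs
      calc ‖g ζ‖ = ‖g ζ‖ := rfl
        _ = ‖g ζ‖ ^ (1:ℝ) := (Real.rpow_one _).symm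
        _ ≤ ‖g ζ‖ ^ p := Real.rpow_le_rpow_of_exponent_le habs.le hp.le
        _ ≤ 1 + ‖g ζ‖ ^ p := by linarith
  -- bound for the polynomial
  obtain ⟨C, hC⟩ := (isCompact_closedBall (0:ℂ) 1).exists_bound_of_continuousOn
    (f.continuous.continuousOn)
  have hFm : AEStronglyMeasurable F (volume.restrict (ball (0:ℂ) 1)) :=
    (f.continuous.continuousOn.mul
      (Complex.continuous_conj.comp_continuousOn hganal.continuousOn)).aestronglyMeasurable
      measurableSet_ball
  have hFint : Integrable F (volume.restrict (ball (0:ℂ) 1)) := by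
    apply Integrable.mono' (hgint.norm.const_mul C) hFm
    refine (ae_restrict_iff' measurableSet_ball).mpr (ae_of_all _ fun ζ hζ => ?_)
    calc ‖F ζ‖ = ‖f.eval ζ‖ * ‖g ζ‖ := by
          rw [hFdef]; simp only [norm_mul, RCLike.norm_conj]
      _ ≤ C * ‖g ζ‖ := by
          apply mul_le_mul_of_nonneg_right (hC ζ (ball_subset_closedBall hζ)) (norm_nonneg _)
  -- integrability of the auxiliary functions
  have hΨint : ∀ (j m : ℕ), Integrable (fun ζ => ((normSq ζ : ℂ)) ^ j * ζ ^ m * g ζ)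
      (volume.restrict (ball (0:ℂ) 1)) := by
    intro j m
    apply Integrable.mono' hgint.norm
    · exact ((((Complex.continuous_ofReal.comp Complex.continuous_normSq).pow j).mul
        (continuous_pow m)).continuousOn.mul hganal.continuousOn).aestronglyMeasurable
        measurableSet_ball
    · refine (ae_restrict_iff' measurableSet_ball).mpr (ae_of_all _ fun ζ hζ => ?_)
      have h1 : ‖ζ‖ < 1 := mem_ball_zero_iff.mp hζ
      have h2 : normSq ζ ≤ 1 := by
        rw [← Complex.sq_norm]
        nlinarith [norm_nonneg ζ, (show ‖ζ‖ < 1 from h1)]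
      have e1 : (0:ℝ) ≤ normSq ζ := normSq_nonneg ζ
      calc ‖((normSq ζ : ℂ)) ^ j * ζ ^ m * g ζ‖
          = (normSq ζ) ^ j * ‖ζ‖ ^ m * ‖g ζ‖ := by
            rw [norm_mul, norm_mul, norm_pow, norm_pow, Complex.norm_real,
              Real.norm_of_nonneg e1]
        _ ≤ 1 * 1 * ‖g ζ‖ := by
            apply mul_le_mul_of_nonneg_right _ (norm_nonneg _)
            apply mul_le_mul (pow_le_one₀ e1 h2) (pow_le_one₀ (norm_nonneg _) h1.le)
              (by positivity) one_pos.le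
        _ = ‖g ζ‖ := by ring
  have hMint : ∀ n : ℕ, Integrable (fun ζ => F ζ * ((starRingEnd ℂ) ζ) ^ n)
      (volume.restrict (ball (0:ℂ) 1)) := by
    intro n
    apply Integrable.mono' hFint.norm
      (hFm.mul ((Complex.continuous_conj.pow n).aestronglyMeasurable))
    refine (ae_restrict_iff' measurableSet_ball).mpr (ae_of_all _ fun ζ hζ => ?_)
    have h1 : ‖ζ‖ < 1 := mem_ball_zero_iff.mp hζ
    calc ‖F ζ * ((starRingEnd ℂ) ζ) ^ n‖ = ‖F ζ‖ * ‖ζ‖ ^ n := by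
          rw [norm_mul, norm_pow, RCLike.norm_conj]
      _ ≤ ‖F ζ‖ * 1 := mul_le_mul_of_nonneg_left
          (pow_le_one₀ (norm_nonneg _) h1.le) (norm_nonneg _)
      _ = ‖F ζ‖ := mul_one _
  set M : ℕ → ℂ := fun n => ∫ ζ in ball (0:ℂ) 1, F ζ * ((starRingEnd ℂ) ζ) ^ n with hMdef
  have hN : f.natDegree < N + 1 := Nat.lt_succ_of_le (Polynomial.natDegree_le_of_degree_le hf)
  -- moments vanish for n > N
  have key : ∀ n : ℕ, N < n → M n = 0 := by
    intro n hn
    have hpt : ∀ ζ : ℂ, (starRingEnd ℂ) (F ζ * ((starRingEnd ℂ) ζ) ^ n)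
        = ∑ j ∈ Finset.range (N+1),
            (starRingEnd ℂ) (f.coeff j) * (((normSq ζ : ℂ)) ^ j * ζ ^ (n-j) * g ζ) := by
      intro ζ
      rw [hFdef]
      simp only [map_mul, map_pow, Complex.conj_conj]
      rw [Polynomial.eval_eq_sum_range' hN ζ, map_sum]
      simp only [map_mul, map_pow]
      rw [Finset.sum_mul, Finset.sum_mul]
      apply Finset.sum_congr rfl
      intro j hj
      have hjn : j ≤ n := le_trans (Nat.lt_succ_iff.mp (Finset.mem_range.mp hj)) hn.le
      have hsplit : ζ ^ n = ζ ^ j * ζ ^ (n-j) := by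
        rw [← pow_add]; congr 1; omega
      have hconj : ((starRingEnd ℂ) ζ) ^ j * ζ ^ j = ((normSq ζ : ℂ)) ^ j := by
        rw [← mul_pow, mul_comm, Complex.mul_conj]
      calc (starRingEnd ℂ) (f.coeff j) * ((starRingEnd ℂ) ζ) ^ j * g ζ * ζ ^ n
          = (starRingEnd ℂ) (f.coeff j)
              * ((((starRingEnd ℂ) ζ) ^ j * ζ ^ j) * ζ ^ (n-j) * g ζ) := by
            rw [hsplit]; ring
        _ = (starRingEnd ℂ) (f.coeff j) * (((normSq ζ : ℂ)) ^ j * ζ ^ (n-j) * g ζ) := by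
            rw [hconj]
    have h1 : ∫ ζ in ball (0:ℂ) 1, (starRingEnd ℂ) (F ζ * ((starRingEnd ℂ) ζ) ^ n) = 0 := by
      calc ∫ ζ in ball (0:ℂ) 1, (starRingEnd ℂ) (F ζ * ((starRingEnd ℂ) ζ) ^ n)
          = ∫ ζ in ball (0:ℂ) 1, ∑ j ∈ Finset.range (N+1),
              (starRingEnd ℂ) (f.coeff j) * (((normSq ζ : ℂ)) ^ j * ζ ^ (n-j) * g ζ) :=
            integral_congr_ae (ae_of_all _ hpt)
        _ = ∑ j ∈ Finset.range (N+1), ∫ ζ in ball (0:ℂ) 1,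
              (starRingEnd ℂ) (f.coeff j) * (((normSq ζ : ℂ)) ^ j * ζ ^ (n-j) * g ζ) :=
            integral_finset_sum _ (fun j _ => (hΨint j (n-j)).const_mul _)
        _ = 0 := by
            apply Finset.sum_eq_zero
            intro j hj
            rw [integral_const_mul]
            have hm1 : 1 ≤ n - j := by
              have := Nat.lt_succ_iff.mp (Finset.mem_range.mp hj); omega
            rw [discMoment hganal j (n-j) hm1 (hΨint j (n-j))]
            exact mul_zero _
    rw [integral_conj] at h1
    have := congrArg (starRingEnd ℂ) h1
    simpa [hMdef] using this
  -- coefficients of Q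
  set κ : ℝ := ((ENNReal.ofReal Real.pi)⁻¹).toReal with hκdef
  refine ⟨∑ n ∈ Finset.range (N+1),
    Polynomial.C ((κ : ℂ) * (((n:ℂ)+1) * M n)) * Polynomial.X ^ n, ?_, ?_⟩
  · apply le_trans (Polynomial.degree_sum_le _ _)
    apply Finset.sup_le
    intro n hn
    apply le_trans (Polynomial.degree_C_mul_X_pow_le n _)
    exact_mod_cast Nat.lt_succ_iff.mp (Finset.mem_range.mp hn)
  · intro w hw
    have hw1 : ‖w‖ < 1 := mem_ball_zero_iff.mp hw
    set term : ℕ → ℂ → ℂ :=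
      fun n ζ => F ζ * ((((n:ℕ):ℂ)+1) * (((starRingEnd ℂ) ζ) * w) ^ n) with htermdef
    have hterm_eq : ∀ (n : ℕ) (ζ : ℂ),
        term n ζ = ((((n:ℕ):ℂ)+1) * w ^ n) * (F ζ * ((starRingEnd ℂ) ζ) ^ n) := by
      intro n ζ
      rw [htermdef]
      simp only [mul_pow]
      ring
    have htermint : ∀ n, Integrable (term n) (volume.restrict (ball (0:ℂ) 1)) := by
      intro n
      have := (hMint n).const_mul ((((n:ℕ):ℂ)+1) * w ^ n)
      apply this.congr          -- Integrable.congr needs ae eq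
      exact ae_of_all _ fun ζ => (hterm_eq n ζ).symm
    have hnormint : ∀ n : ℕ, ∫ ζ in ball (0:ℂ) 1, ‖term n ζ‖
        ≤ (((n:ℝ)+1) * ‖w‖ ^ n) * ∫ ζ in ball (0:ℂ) 1, ‖F ζ‖ := by
      intro n
      rw [← integral_const_mul]
      apply integral_mono_of_nonneg (ae_of_all _ fun ζ => norm_nonneg _)
        (hFint.norm.const_mul _)
      refine (ae_restrict_iff' measurableSet_ball).mpr (ae_of_all _ fun ζ hζ => ?_)
      have h1 : ‖ζ‖ < 1 := mem_ball_zero_iff.mp hζ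
      have hn1 : ‖(((n:ℕ):ℂ)+1)‖ = (n:ℝ)+1 := by
        rw [show (((n:ℕ):ℂ)+1) = (((n+1:ℕ)):ℂ) by push_cast; ring, Complex.norm_natCast]
        push_cast; ring
      calc ‖term n ζ‖ = (((n:ℝ)+1) * ‖w‖ ^ n) * (‖F ζ‖ * ‖ζ‖ ^ n) := by
            rw [hterm_eq n ζ, norm_mul, norm_mul, norm_mul, norm_pow, norm_pow,
              RCLike.norm_conj, hn1]
        _ ≤ (((n:ℝ)+1) * ‖w‖ ^ n) * (‖F ζ‖ * 1) := by
            apply mul_le_mul_of_nonneg_left _ (by positivity)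
            exact mul_le_mul_of_nonneg_left (pow_le_one₀ (norm_nonneg _) h1.le)
              (norm_nonneg _)
        _ = (((n:ℝ)+1) * ‖w‖ ^ n) * ‖F ζ‖ := by rw [mul_one]
    have hsum : Summable (fun n => ∫ ζ in ball (0:ℂ) 1, ‖term n ζ‖) := by
      apply Summable.of_nonneg_of_le
        (fun n => integral_nonneg fun ζ => norm_nonneg _) hnormint
      apply Summable.mul_right
      have h0 : ‖(‖w‖)‖ < 1 := by rwa [Real.norm_eq_abs, _root_.abs_of_nonneg (norm_nonneg w)]
      have := summable_choose_mul_geometric_of_norm_lt_one (R := ℝ) 1 h0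
      apply this.congr
      intro n
      rw [Nat.choose_one_right]
      push_cast; ring
    have hHasSum := hasSum_integral_of_summable_integral_norm htermint hsum
    have htsum : (∫ ζ in ball (0:ℂ) 1, ∑' n, term n ζ)
        = ∫ ζ in ball (0:ℂ) 1, F ζ / (1 - (starRingEnd ℂ) ζ * w) ^ 2 := by
      apply setIntegral_congr_fun measurableSet_ball
      intro ζ hζ
      have h1 : ‖ζ‖ < 1 := mem_ball_zero_iff.mp hζ
      have hu : ‖(starRingEnd ℂ) ζ * w‖ < 1 := by
        rw [norm_mul, RCLike.norm_conj]
        nlinarith [norm_nonneg ζ, norm_nonneg w]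
      have h2 : HasSum (fun n : ℕ => (((n:ℕ):ℂ)+1) * (((starRingEnd ℂ) ζ) * w) ^ n)
          (1 / (1 - ((starRingEnd ℂ) ζ) * w) ^ 2) := by
        have := hasSum_choose_mul_geometric_of_norm_lt_one (𝕜 := ℂ) 1 hu
        have h3 : (1:ℕ) + 1 = 2 := rfl
        rw [h3] at this
        have hfun : (fun n : ℕ => (((n:ℕ):ℂ)+1) * (((starRingEnd ℂ) ζ) * w) ^ n)
            = fun n : ℕ => (((n+1).choose 1 : ℕ):ℂ) * (((starRingEnd ℂ) ζ) * w) ^ n := by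
          funext n
          rw [Nat.choose_one_right]
          push_cast; ring
        rw [hfun]
        exact this
      have := (h2.mul_left (F ζ)).tsum_eq
      rw [htermdef]
      simp only
      rw [this, mul_one_div]
    rw [htsum] at hHasSum
    have hterm_int_eq : ∀ n : ℕ, (∫ ζ in ball (0:ℂ) 1, term n ζ)
        = ((((n:ℕ):ℂ)+1) * w ^ n) * M n := by
      intro n
      rw [hMdef]
      simp only
      rw [← integral_const_mul]
      apply integral_congr_ae (ae_of_all _ fun ζ => hterm_eq n ζ)
    simp_rw [hterm_int_eq] at hHasSum
    have hfin : HasSum (fun n : ℕ => ((((n:ℕ):ℂ)+1) * w ^ n) * M n)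
        (∑ n ∈ Finset.range (N+1), ((((n:ℕ):ℂ)+1) * w ^ n) * M n) := by
      apply hasSum_sum_of_ne_finset_zero
      intro n hn
      have hNn : N < n := by
        by_contra hle
        exact hn (Finset.mem_range.mpr (by omega))
      rw [key n hNn, mul_zero]
    have hT := hHasSum.unique hfin
    rw [bergmanProj, σA, integral_smul_measure]
    rw [show (∫ ζ in ball (0:ℂ) 1,
        F ζ / (1 - (starRingEnd ℂ) ζ * w) ^ 2) = _ from hT]
    rw [Polynomial.eval_finset_sum]
    simp only [Polynomial.eval_mul, Polynomial.eval_C, Polynomial.eval_pow, Polynomial.eval_X]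
    rw [Complex.real_smul, Finset.mul_sum]
    apply Finset.sum_congr rfl
    intro n _
    rw [hκdef]
    ring
end
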